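/- Let S = {S_1,...,S_t} be an (A,Ψ)-frame over [n] (with parameters r ≥ 1, δ ≥ 2, partition {A_1,...,A_α, B} of [t], and Ψ = {ξ_1,...,ξ_α} ⊆ [n]), let k ≥ 1, and let Ω_0 be defined by fixing, for each j ∈ {1,...,α} and i ∈ A_j, an r-element subset U_i ⊆ S_i with ξ_j ∈ U_i, and for each i ∈ B an r-element subset U_i ⊆ S_i, and setting Ω_0 = ∪_{i∈[t]} U_i. Let F_q be a finite field with q ≥ C(n, k−1) (the binomial coefficient n choose k−1). Suppose Ω_0 ⊆ Ω ⊆ [n] and vectors G_ℓ ∈ F_q^k for ℓ ∈ Ω are such that for every (S,r,k)-core S ⊆ Ω the vectors {G_ℓ : ℓ ∈ S} are linearly independent. If i ∈ [t] with S_i \ Ω ≠ ∅, then for any λ ∈ S_i \ Ω there exists a vector G_λ in the span of {G_ℓ : ℓ ∈ S_i ∩ Ω} such that for every (S,r,k)-core S ⊆ Ω ∪ {λ} the vectors {G_ℓ : ℓ ∈ S} are linearly independent. -/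

import Mathlib

/-- `S = {S_1,…,S_t}` is an `(A,Ψ)`-frame over `[n]`, with blocks `A_1,…,A_a, B`
partitioning `[t]` and `Ψ = {ξ_1,…,ξ_a} ⊆ [n]`. -/
def IsFrame {n t a : ℕ} (r δ : ℕ) (S : Fin t → Finset (Fin n))
    (A : Fin a → Finset (Fin t)) (B : Finset (Fin t)) (ξ : Fin a → Fin n) : Prop :=
  (∀ i : Fin t, (S i).card = r + δ - 1) ∧
  -- {A_1,…,A_a, B} is a partition of [t]
  (∀ j₁ j₂ : Fin a, j₁ ≠ j₂ → Disjoint (A j₁) (A j₂)) ∧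
  (∀ j : Fin a, Disjoint (A j) B) ∧
  ((Finset.univ.biUnion A) ∪ B = Finset.univ) ∧
  -- frame condition (1): ∩_{ℓ∈A_j} S_ℓ = {ξ_j}, and the S_i \ {ξ_j}, i ∈ A_j, are disjoint
  (∀ j : Fin a, ∀ x : Fin n, (∀ ℓ ∈ A j, x ∈ S ℓ) ↔ x = ξ j) ∧
  (∀ j : Fin a, ∀ i₁ ∈ A j, ∀ i₂ ∈ A j, i₁ ≠ i₂ →
    Disjoint (S i₁ \ {ξ j}) (S i₂ \ {ξ j})) ∧
  -- frame condition (2): the ∪_{ℓ∈A_j} S_ℓ together with the S_j, j ∈ B, partition [n]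
  (∀ j₁ j₂ : Fin a, j₁ ≠ j₂ → Disjoint ((A j₁).biUnion S) ((A j₂).biUnion S)) ∧
  (∀ j : Fin a, ∀ i ∈ B, Disjoint ((A j).biUnion S) (S i)) ∧
  (∀ i₁ ∈ B, ∀ i₂ ∈ B, i₁ ≠ i₂ → Disjoint (S i₁) (S i₂)) ∧
  (Finset.univ.biUnion S = Finset.univ)

/-- `T` is an `(S,r)`-core. -/
def IsCore {n t a : ℕ} (S : Fin t → Finset (Fin n))
    (A : Fin a → Finset (Fin t)) (B : Finset (Fin t)) (ξ : Fin a → Fin n)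
    (r : ℕ) (T : Finset (Fin n)) : Prop :=
  (∀ j : Fin a, ξ j ∈ T → ∀ i ∈ A j, (T ∩ S i).card ≤ r) ∧
  (∀ j : Fin a, ξ j ∉ T → ∃ ij ∈ A j, (T ∩ S ij).card ≤ r ∧
    ∀ i ∈ A j, i ≠ ij → (T ∩ S i).card ≤ r - 1) ∧
  (∀ i ∈ B, (T ∩ S i).card ≤ r)

lemma exists_avoid {F M : Type*} [Field F] [Fintype F] [AddCommGroup M] [Module F M]
    (W : Submodule F M) :
    ∀ (l : List (Submodule F M)), (∀ V ∈ l, ¬ W ≤ V) → l.length < Fintype.card F →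
      ∃ g ∈ W, ∀ V ∈ l, g ∉ V := by
  classical
  intro l
  induction l with
  | nil => exact fun _ _ => ⟨0, W.zero_mem, by simp⟩
  | cons V0 l ih =>
    intro hV hlen
    obtain ⟨g, hgW, hg⟩ := ih (fun V hv => hV V (List.mem_cons_of_mem _ hv))
      ((Nat.lt_succ_self _).trans hlen)
    by_cases hg0 : g ∈ V0
    case neg =>
      refine ⟨g, hgW, fun V hv => ?_⟩
      rcases List.mem_cons.mp hv with h | h
      · exact h ▸ hg0
      · exact hg V h
    case pos =>
      obtain ⟨u, huW, hu⟩ := SetLike.not_le_iff_exists.mp (hV V0 List.mem_cons_self)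
      -- consider points g + c • u
      set badF : Finset F := Finset.univ.filter (fun c => ∃ V ∈ V0 :: l, g + c • u ∈ V) with hbadF
      have hsub : badF ⊆ (V0 :: l).toFinset.biUnion
          (fun V => (Finset.univ : Finset F).filter (fun c => g + c • u ∈ V)) := by
        intro c hc
        obtain ⟨V, hVmem, hcV⟩ := (Finset.mem_filter.mp hc).2
        exact Finset.mem_biUnion.mpr ⟨V, List.mem_toFinset.mpr hVmem, by
          simp [hcV]⟩
      have hone : ∀ V ∈ V0 :: l, ((Finset.univ : Finset F).filter (fun c => g + c • u ∈ V)).card ≤ 1 := by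
        intro V hVmem
        refine Finset.card_le_one.mpr ?_
        intro c hc c' hc'
        have hc1 : g + c • u ∈ V := (Finset.mem_filter.mp hc).2
        have hc2 : g + c' • u ∈ V := (Finset.mem_filter.mp hc').2
        by_contra hne
        have hsub' : (c - c') • u ∈ V := by
          have := V.sub_mem hc1 hc2
          simpa [sub_smul] using this
        have huV : u ∈ V := by
          have := V.smul_mem (c - c')⁻¹ hsub'
          rwa [smul_smul, inv_mul_cancel₀ (sub_ne_zero.mpr hne), one_smul] at this
        have hgV : g ∈ V := by
          have := V.sub_mem hc1 (V.smul_mem c huV)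
          simpa using this
        rcases List.mem_cons.mp hVmem with h | h
        · exact hu (h ▸ huV)
        · exact hg V h hgV
      have hcard : badF.card ≤ (V0 :: l).length := by
        calc badF.card ≤ ((V0 :: l).toFinset.biUnion
            (fun V => (Finset.univ : Finset F).filter (fun c => g + c • u ∈ V))).card :=
              Finset.card_le_card hsub
          _ ≤ ∑ V ∈ (V0 :: l).toFinset, ((Finset.univ : Finset F).filter (fun c => g + c • u ∈ V)).card :=
              Finset.card_biUnion_le
          _ ≤ ∑ V ∈ (V0 :: l).toFinset, 1 :=
              Finset.sum_le_sum (fun V hVm => hone V (List.mem_toFinset.mp hVm))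
          _ = (V0 :: l).toFinset.card := by simp
          _ ≤ (V0 :: l).length := List.toFinset_card_le _
      have : ¬ (Finset.univ : Finset F) ⊆ badF := by
        intro h
        have := Finset.card_le_card h
        rw [Finset.card_univ] at this
        omega
      obtain ⟨c, _, hc⟩ := Finset.not_subset.mp this
      refine ⟨g + c • u, W.add_mem hgW (W.smul_mem c huW), fun V hVmem hmem => ?_⟩
      exact hc (Finset.mem_filter.mpr ⟨Finset.mem_univ c, ⟨V, hVmem, hmem⟩⟩)

/-- Lemma `code-extd`: with `Ω_0 = ∪_{i∈[t]} U_i` as in Remark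
`nor-core`, `q ≥ C(n,k-1)`, `Ω_0 ⊆ Ω ⊆ [n]`, and vectors `G_ℓ ∈ F_q^k` (`ℓ ∈ Ω`) such
that every `(S,r,k)`-core inside `Ω` indexes linearly independent vectors: if
`S_i \ Ω ≠ ∅` then for any `λ ∈ S_i \ Ω` there is `G_λ` in the span of
`{G_ℓ : ℓ ∈ S_i ∩ Ω}` such that every `(S,r,k)`-core inside `Ω ∪ {λ}` indexes linearly
independent vectors. -/
theorem statement16 {n t a k r δ : ℕ} {F : Type} [Field F] [Fintype F] [DecidableEq F]
    (hr1 : 1 ≤ r) (hδ : 2 ≤ δ) (hk1 : 1 ≤ k)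
    (hq : n.choose (k - 1) ≤ Fintype.card F)
    (S : Fin t → Finset (Fin n)) (A : Fin a → Finset (Fin t)) (B : Finset (Fin t))
    (ξ : Fin a → Fin n) (hframe : IsFrame r δ S A B ξ)
    (U : Fin t → Finset (Fin n))
    (hUsub : ∀ i : Fin t, U i ⊆ S i) (hUcard : ∀ i : Fin t, (U i).card = r)
    (hUξ : ∀ j : Fin a, ∀ i ∈ A j, ξ j ∈ U i)
    (Ω : Finset (Fin n)) (hΩ : Finset.univ.biUnion U ⊆ Ω)
    (G : Fin n → (Fin k → F))
    (hind : ∀ T ⊆ Ω, IsCore S A B ξ r T → T.card = k →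
      LinearIndependent F (fun ℓ : {x // x ∈ T} => G ℓ.1))
    (i : Fin t) (lam : Fin n) (hlam : lam ∈ S i \ Ω) :
    ∃ Glam : Fin k → F,
      Glam ∈ Submodule.span F (G '' ((S i ∩ Ω : Finset (Fin n)) : Set (Fin n))) ∧
      ∀ T ⊆ insert lam Ω, IsCore S A B ξ r T → T.card = k →
        LinearIndependent F (fun ℓ : {x // x ∈ T} => Function.update G lam Glam ℓ.1) := by
  classical
  obtain ⟨hcardS, hAdisj, hABdisj, hcover, hξmem, hSdisj, hblockdisj, hblockB, hBdisj, hScover⟩ :=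
    hframe
  have hlamS : lam ∈ S i := (Finset.mem_sdiff.mp hlam).1
  have hlamΩ : lam ∉ Ω := (Finset.mem_sdiff.mp hlam).2
  have hUΩ : ∀ m : Fin t, U m ⊆ Ω := fun m x hx =>
    hΩ (Finset.mem_biUnion.mpr ⟨m, Finset.mem_univ m, hx⟩)
  -- every block A j is nonempty
  have hAne : ∀ j, (A j).Nonempty := by
    intro j
    by_contra h
    rw [Finset.not_nonempty_iff_eq_empty] at h
    have hall : ∀ x : Fin n, x = ξ j := fun x => (hξmem j x).mp (by simp [h])
    have hUne : (U i).Nonempty := Finset.card_pos.mp (by rw [hUcard i]; omega)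
    obtain ⟨μ, hμ⟩ := hUne
    exact hlamΩ (by rw [hall lam, ← hall μ]; exact hUΩ i hμ)
  have hξΩ : ∀ j, ξ j ∈ Ω := by
    intro j
    obtain ⟨ℓ, hℓ⟩ := hAne j
    exact hUΩ ℓ (hUξ j ℓ hℓ)
  have hξlam : ∀ j, ξ j ≠ lam := fun j h => hlamΩ (h ▸ hξΩ j)
  -- each index lies in some block or in B
  have hloc : ∀ m : Fin t, (∃ j, m ∈ A j) ∨ m ∈ B := by
    intro m
    have hm : m ∈ (Finset.univ.biUnion A) ∪ B := by rw [hcover]; exact Finset.mem_univ m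
    rcases Finset.mem_union.mp hm with h | h
    · obtain ⟨j, _, hj⟩ := Finset.mem_biUnion.mp h
      exact Or.inl ⟨j, hj⟩
    · exact Or.inr h
  -- an element in S m₁ with the ξ-exception can be in only one S m
  have honly : ∀ (m₁ m₂ : Fin t) (x : Fin n), x ∈ S m₁ → x ∈ S m₂ →
      (∀ j, m₁ ∈ A j → x ≠ ξ j) → m₁ = m₂ := by
    intro m₁ m₂ x h1 h2 hne
    by_contra hmm
    rcases hloc m₁ with ⟨j₁, hj₁⟩ | hb₁ <;> rcases hloc m₂ with ⟨j₂, hj₂⟩ | hb₂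
    · by_cases hj : j₁ = j₂
      · subst hj
        have hd := hSdisj j₁ m₁ hj₁ m₂ hj₂ hmm
        exact Finset.disjoint_left.mp hd
          (Finset.mem_sdiff.mpr ⟨h1, by simp [hne j₁ hj₁]⟩)
          (Finset.mem_sdiff.mpr ⟨h2, by simp [hne j₁ hj₁]⟩)
    
      · exact Finset.disjoint_left.mp (hblockdisj j₁ j₂ hj)
          (Finset.mem_biUnion.mpr ⟨m₁, hj₁, h1⟩) (Finset.mem_biUnion.mpr ⟨m₂, hj₂, h2⟩)
    · exact Finset.disjoint_left.mp (hblockB j₁ m₂ hb₂)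
        (Finset.mem_biUnion.mpr ⟨m₁, hj₁, h1⟩) h2
    · exact Finset.disjoint_left.mp (hblockB j₂ m₁ hb₁)
        (Finset.mem_biUnion.mpr ⟨m₂, hj₂, h2⟩) h1
    · exact Finset.disjoint_left.mp (hBdisj m₁ hb₁ m₂ hb₂ hmm) h1 h2
  -- if ξ j ∈ S m then m ∈ A j
  have hξS : ∀ (j : Fin a) (m : Fin t), ξ j ∈ S m → m ∈ A j := by
    intro j m hmem
    obtain ⟨ℓ, hℓ⟩ := hAne j
    have hξSℓ : ξ j ∈ S ℓ := ((hξmem j (ξ j)).mpr rfl) ℓ hℓ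
    by_contra hm
    rcases hloc m with ⟨j', hj'⟩ | hb
    · have hne : j' ≠ j := fun h => hm (h ▸ hj')
      exact Finset.disjoint_left.mp (hblockdisj j' j hne)
        (Finset.mem_biUnion.mpr ⟨m, hj', hmem⟩) (Finset.mem_biUnion.mpr ⟨ℓ, hℓ, hξSℓ⟩)
    · exact Finset.disjoint_right.mp (hblockB j m hb) hmem
        (Finset.mem_biUnion.mpr ⟨ℓ, hℓ, hξSℓ⟩)
  have hξinj : ∀ j₁ j₂ : Fin a, ξ j₁ = ξ j₂ → j₁ = j₂ := by
    intro j₁ j₂ he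
    by_contra hne
    obtain ⟨ℓ, hℓ⟩ := hAne j₁
    have h1 : ξ j₁ ∈ S ℓ := ((hξmem j₁ (ξ j₁)).mpr rfl) ℓ hℓ
    have h2 : ℓ ∈ A j₂ := hξS j₂ ℓ (he ▸ h1)
    exact Finset.disjoint_left.mp (hAdisj j₁ j₂ hne) hℓ h2
  have hlamonly : ∀ m, lam ∈ S m → m = i := by
    intro m hm
    exact honly m i lam hm hlamS (fun j _ => fun he => hξlam j he.symm)
  -- counting lemma for the swap T ↦ insert μ (T.erase lam)
  have hcount : ∀ (T : Finset (Fin n)) (μ : Fin n) (m : Fin t), lam ∈ T → μ ∉ T → μ ∈ S i →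
      ((insert μ (T.erase lam)) ∩ S m).card =
        if μ ∈ S m ∧ m ≠ i then (T ∩ S m).card + 1 else (T ∩ S m).card := by
    intro T μ m hlamT hμT hμS
    have herase : (T.erase lam) ∩ S m = (T ∩ S m).erase lam := Finset.erase_inter lam T (S m)
    by_cases hμm : μ ∈ S m
    · rw [Finset.insert_inter_of_mem hμm, herase]
      by_cases hmi : m = i
      · subst hmi
        have hlm : lam ∈ T ∩ S m := Finset.mem_inter.mpr ⟨hlamT, hlamS⟩
        rw [Finset.card_insert_of_notMem
            (fun h => hμT (Finset.mem_inter.mp (Finset.mem_of_mem_erase h)).1),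
          Finset.card_erase_of_mem hlm, if_neg (by simp)]
        have : 1 ≤ (T ∩ S m).card := Finset.card_pos.mpr ⟨lam, hlm⟩
        omega
      · have hlm : lam ∉ S m := fun h => hmi (hlamonly m h)
        rw [Finset.erase_eq_of_notMem (fun h => hlm (Finset.mem_inter.mp h).2),
          Finset.card_insert_of_notMem (fun h => hμT (Finset.mem_inter.mp h).1)]
        simp [hμm, hmi]
    · have hmi : m ≠ i := fun h => hμm (h ▸ hμS)
      have hlm : lam ∉ S m := fun h => hmi (hlamonly m h)
      rw [Finset.insert_inter_of_notMem hμm, herase,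
        Finset.erase_eq_of_notMem (fun h => hlm (Finset.mem_inter.mp h).2)]
      simp [hμm]
  -- ξ-membership preservation
  have hmem' : ∀ (T : Finset (Fin n)) (μ : Fin n) (j' : Fin a), μ ≠ ξ j' →
      (ξ j' ∈ insert μ (T.erase lam) ↔ ξ j' ∈ T) := by
    intro T μ j' hne
    simp only [Finset.mem_insert, Finset.mem_erase]
    constructor
    · rintro (h | ⟨-, h⟩)
      · exact absurd h.symm hne
      · exact h
    · intro h
      exact Or.inr ⟨hξlam j', h⟩
  -- core preservation, generic case (μ only in S i, μ no ξ)
  have hcore1 : ∀ (T : Finset (Fin n)) (μ : Fin n), IsCore S A B ξ r T → lam ∈ T → μ ∉ T →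
      μ ∈ S i → (∀ m, μ ∈ S m → m = i) → (∀ j', μ ≠ ξ j') →
      IsCore S A B ξ r (insert μ (T.erase lam)) := by
    intro T μ hT hlamT hμT hμS hμonly hμξ
    have hc : ∀ m : Fin t, ((insert μ (T.erase lam)) ∩ S m).card = (T ∩ S m).card := by
      intro m
      rw [hcount T μ m hlamT hμT hμS]
      by_cases h : μ ∈ S m
      · simp [hμonly m h]
      · simp [h]
    obtain ⟨h1, h2, h3⟩ := hT
    refine ⟨?_, ?_, ?_⟩
    · intro j hj m hm
      rw [hc m]
      exact h1 j ((hmem' T μ j (hμξ j)).mp hj) m hm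
    · intro j hj
      obtain ⟨ij, hij, hr, hrest⟩ := h2 j (fun h => hj ((hmem' T μ j (hμξ j)).mpr h))
      exact ⟨ij, hij, by rw [hc ij]; exact hr, fun m hm hmij => by rw [hc m]; exact hrest m hm hmij⟩
    · intro m hm
      rw [hc m]
      exact h3 m hm
  -- core preservation, special case μ = ξ j
  have hcore2 : ∀ (T : Finset (Fin n)) (j : Fin a), IsCore S A B ξ r T → lam ∈ T → i ∈ A j →
      ξ j ∉ T → (T ∩ S i).card ≤ r → (∀ m ∈ A j, m ≠ i → (T ∩ S m).card ≤ r - 1) →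
      IsCore S A B ξ r (insert (ξ j) (T.erase lam)) := by
    intro T j hT hlamT hiAj hξjT hri hrest
    have hξjSi : ξ j ∈ S i := ((hξmem j (ξ j)).mpr rfl) i hiAj
    obtain ⟨h1, h2, h3⟩ := hT
    have hcnt := fun m => hcount T (ξ j) m hlamT hξjT hξjSi
    have hunch : ∀ m : Fin t, m ∉ A j → ((insert (ξ j) (T.erase lam)) ∩ S m).card
        = (T ∩ S m).card := by
      intro m hm
      rw [hcnt m, if_neg]
      rintro ⟨hmem, -⟩
      exact hm (hξS j m hmem)
    have hξmemT'' : ∀ j' : Fin a, j' ≠ j → (ξ j' ∈ insert (ξ j) (T.erase lam) ↔ ξ j' ∈ T) :=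
      fun j' hj' => hmem' T (ξ j) j' (fun h => hj' (hξinj j' j h.symm))
    refine ⟨?_, ?_, ?_⟩
    · intro j'' hj'' m hm
      by_cases hjj : j'' = j
      · subst hjj
        rw [hcnt m]
        by_cases hmi : m = i
        · subst hmi
          rw [if_neg (by simp)]
          exact hri
        · rw [if_pos ⟨((hξmem j'' (ξ j'')).mpr rfl) m hm, hmi⟩]
          have := hrest m hm hmi
          omega
      · have hmAj : m ∉ A j := fun hmem =>
          Finset.disjoint_left.mp (hAdisj j'' j hjj) hm hmem
        rw [hunch m hmAj]
        exact h1 j'' ((hξmemT'' j'' hjj).mp hj'') m hm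
    · intro j'' hj''
      have hjj : j'' ≠ j := fun h => hj'' (h ▸ Finset.mem_insert_self _ _)
      obtain ⟨ij, hij, hr', hrest'⟩ := h2 j'' (fun h => hj'' ((hξmemT'' j'' hjj).mpr h))
      have hunchA : ∀ m ∈ A j'', ((insert (ξ j) (T.erase lam)) ∩ S m).card = (T ∩ S m).card :=
        fun m hm => hunch m (fun hmem => Finset.disjoint_left.mp (hAdisj j'' j hjj) hm hmem)
      exact ⟨ij, hij, by rw [hunchA ij hij]; exact hr',
        fun m hm hmij => by rw [hunchA m hm]; exact hrest' m hm hmij⟩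
    · intro m hm
      have hmAj : m ∉ A j := fun hmem => Finset.disjoint_left.mp (hABdisj j) hmem hm
      rw [hunch m hmAj]
      exact h3 m hm
  -- the swap lemma
  have hswap : ∀ T : Finset (Fin n), T ⊆ insert lam Ω → IsCore S A B ξ r T → lam ∈ T →
      ∃ μ : Fin n, μ ∈ S i ∧ μ ∈ Ω ∧ μ ∉ T ∧ insert μ (T.erase lam) ⊆ Ω ∧
        IsCore S A B ξ r (insert μ (T.erase lam)) ∧ (insert μ (T.erase lam)).card = T.card := by
    intro T hTsub hTcore hlamT
    have hTpos : 1 ≤ T.card := Finset.card_pos.mpr ⟨lam, hlamT⟩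
    have heraseΩ : T.erase lam ⊆ Ω := by
      intro x hx
      obtain ⟨hxne, hxT⟩ := Finset.mem_erase.mp hx
      rcases Finset.mem_insert.mp (hTsub hxT) with h | h
      · exact absurd h hxne
      · exact h
    have hcardins : ∀ μ : Fin n, μ ∉ T → (insert μ (T.erase lam)).card = T.card := by
      intro μ hμT
      rw [Finset.card_insert_of_notMem (fun h => hμT (Finset.mem_of_mem_erase h)),
        Finset.card_erase_of_mem hlamT]
      omega
    have hsubins : ∀ μ : Fin n, μ ∈ Ω → insert μ (T.erase lam) ⊆ Ω := by
      intro μ hμΩ x hx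
      rcases Finset.mem_insert.mp hx with h | h
      · exact h ▸ hμΩ
      · exact heraseΩ h
    have hbuild : ∀ μ : Fin n, μ ∈ Ω → μ ∈ S i → μ ∉ T → (∀ j', μ ≠ ξ j') →
        ∃ μ' : Fin n, μ' ∈ S i ∧ μ' ∈ Ω ∧ μ' ∉ T ∧ insert μ' (T.erase lam) ⊆ Ω ∧
          IsCore S A B ξ r (insert μ' (T.erase lam)) ∧
          (insert μ' (T.erase lam)).card = T.card := by
      intro μ hμΩ hμSi hμT hμξ
      have hμonly : ∀ m, μ ∈ S m → m = i := fun m hm =>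
        (honly i m μ hμSi hm (fun j _ => hμξ j)).symm
      exact ⟨μ, hμSi, hμΩ, hμT, hsubins μ hμΩ,
        hcore1 T μ hTcore hlamT hμT hμSi hμonly hμξ, hcardins μ hμT⟩
    have hpick : ∀ X : Finset (Fin n), (U i ∩ X).card < r → ∃ μ ∈ U i, μ ∉ X := by
      intro X h
      by_contra h'
      push_neg at h'
      rw [Finset.inter_eq_left.mpr h', hUcard i] at h
      omega
    have hUiT : (U i ∩ T).card ≤ (T ∩ S i).card - 1 := by
      have hsub : U i ∩ T ⊆ (T ∩ S i).erase lam := by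
        intro x hx
        obtain ⟨hxU, hxT⟩ := Finset.mem_inter.mp hx
        exact Finset.mem_erase.mpr ⟨fun h => hlamΩ (h ▸ hUΩ i hxU),
          Finset.mem_inter.mpr ⟨hxT, hUsub i hxU⟩⟩
      calc (U i ∩ T).card ≤ ((T ∩ S i).erase lam).card := Finset.card_le_card hsub
        _ = (T ∩ S i).card - 1 := Finset.card_erase_of_mem
            (Finset.mem_inter.mpr ⟨hlamT, hlamS⟩)
    have hTSipos : 1 ≤ (T ∩ S i).card :=
      Finset.card_pos.mpr ⟨lam, Finset.mem_inter.mpr ⟨hlamT, hlamS⟩⟩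
    rcases hloc i with ⟨j, hij⟩ | hbi
    · have hξjSi : ξ j ∈ S i := ((hξmem j (ξ j)).mpr rfl) i hij
      have hμξgen : ∀ μ : Fin n, μ ∈ S i → μ ≠ ξ j → ∀ j', μ ≠ ξ j' := by
        intro μ hμSi hμj j' h
        have hij' : i ∈ A j' := hξS j' i (h ▸ hμSi)
        by_cases hjj : j' = j
        · exact hμj (hjj ▸ h)
        · exact Finset.disjoint_left.mp (hAdisj j' j hjj) hij' hij
      by_cases hξjT : ξ j ∈ T
      · have hri : (T ∩ S i).card ≤ r := hTcore.1 j hξjT i hij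
        obtain ⟨μ, hμU, hμT⟩ := hpick T (by omega)
        exact hbuild μ (hUΩ i hμU) (hUsub i hμU) hμT
          (hμξgen μ (hUsub i hμU) (fun h => hμT (h ▸ hξjT)))
      · obtain ⟨ij, hijA, hrij, hrest⟩ := hTcore.2.1 j hξjT
        by_cases hii : ij = i
        · subst hii
          exact ⟨ξ j, hξjSi, hξΩ j, hξjT, hsubins _ (hξΩ j),
            hcore2 T j hTcore hlamT hij hξjT hrij hrest, hcardins _ hξjT⟩
        · have hri : (T ∩ S i).card ≤ r - 1 := hrest i hij (fun h => hii h.symm)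
          have hlt : (U i ∩ insert (ξ j) T).card < r := by
            have c1 : U i ∩ insert (ξ j) T ⊆ insert (ξ j) (U i ∩ T) := by
              intro x hx
              obtain ⟨hxU, hxT⟩ := Finset.mem_inter.mp hx
              rcases Finset.mem_insert.mp hxT with h | h
              · exact h ▸ Finset.mem_insert_self _ _
              · exact Finset.mem_insert_of_mem (Finset.mem_inter.mpr ⟨hxU, h⟩)
            have c2 := Finset.card_insert_le (ξ j) (U i ∩ T)
            have c3 := Finset.card_le_card c1
            omega
          obtain ⟨μ, hμU, hμX⟩ := hpick (insert (ξ j) T) hlt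
          have hμT : μ ∉ T := fun h => hμX (Finset.mem_insert_of_mem h)
          have hμj : μ ≠ ξ j := fun h => hμX (h ▸ Finset.mem_insert_self _ _)
          exact hbuild μ (hUΩ i hμU) (hUsub i hμU) hμT (hμξgen μ (hUsub i hμU) hμj)
    · have hri : (T ∩ S i).card ≤ r := hTcore.2.2 i hbi
      obtain ⟨μ, hμU, hμT⟩ := hpick T (by omega)
      refine hbuild μ (hUΩ i hμU) (hUsub i hμU) hμT ?_
      intro j' h
      have hij' : i ∈ A j' := hξS j' i (h ▸ hUsub i hμU)
      exact Finset.disjoint_left.mp (hABdisj j') hij' hbi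
  -- linear algebra part
  set W := Submodule.span F (G '' ((S i ∩ Ω : Finset (Fin n)) : Set (Fin n))) with hW
  set bad : Finset (Finset (Fin n)) :=
    (Ω.powersetCard (k-1)).filter (fun T' => IsCore S A B ξ r (insert lam T')) with hbad
  have hbadprop : ∀ T' ∈ bad, T' ⊆ Ω ∧ T'.card = k - 1 ∧
      IsCore S A B ξ r (insert lam T') := by
    intro T' hT'
    obtain ⟨hp, hc⟩ := Finset.mem_filter.mp hT'
    obtain ⟨hsub, hcard⟩ := Finset.mem_powersetCard.mp hp
    exact ⟨hsub, hcard, hc⟩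
  have hkey : ∀ T' ∈ bad, LinearIndependent F (fun x : (T' : Set (Fin n)) => G x.1) ∧
      ¬ W ≤ Submodule.span F (G '' (T' : Set (Fin n))) := by
    intro T' hT'
    obtain ⟨hsub, hcard, hcore⟩ := hbadprop T' hT'
    have hlamT' : lam ∉ T' := fun h => hlamΩ (hsub h)
    have hTcard : (insert lam T').card = k := by
      rw [Finset.card_insert_of_notMem hlamT']
      omega
    obtain ⟨μ, hμSi, hμΩ, hμT, hsubΩ, hcore'', hcard''⟩ := hswap (insert lam T')
      (Finset.insert_subset_insert lam hsub) hcore (Finset.mem_insert_self _ _)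
    rw [Finset.erase_insert hlamT'] at hsubΩ hcore'' hcard''
    have hμT' : μ ∉ T' := fun h => hμT (Finset.mem_insert_of_mem h)
    have hindep := hind (insert μ T') hsubΩ hcore'' (by rw [hcard'']; exact hTcard)
    have hindep2 : LinearIndependent F (fun x : ↥(insert μ (T' : Set (Fin n))) => G x.1) := by
      have hcoe : ((insert μ T' : Finset (Fin n)) : Set (Fin n))
          = insert μ (T' : Set (Fin n)) := Finset.coe_insert μ T'
      rw [← hcoe]
      exact hindep
    have hμT'' : μ ∉ (T' : Set (Fin n)) := by simpa using hμT'
    obtain ⟨hindepT', hμspan⟩ := (linearIndepOn_insert (f := G) hμT'').mp hindep2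
    refine ⟨hindepT', fun hle => hμspan (hle ?_)⟩
    exact Submodule.subset_span ⟨μ, by simpa using ⟨hμSi, hμΩ⟩, rfl⟩
  -- the list of forbidden subspaces
  have havoid : ∀ V ∈ bad.toList.map (fun T' : Finset (Fin n) => Submodule.span F (G '' (T' : Set (Fin n)))),
      ¬ W ≤ V := by
    intro V hV
    obtain ⟨T', hT', rfl⟩ := List.mem_map.mp hV
    exact (hkey T' (Finset.mem_toList.mp hT')).2
  have hlen : (bad.toList.map
      (fun T' : Finset (Fin n) => Submodule.span F (G '' (T' : Set (Fin n))))).length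
      < Fintype.card F := by
    have h1 : (bad.toList.map
        (fun T' : Finset (Fin n) =>
          Submodule.span F (G '' (T' : Set (Fin n))))).length = bad.card := by
      rw [List.length_map, Finset.length_toList]
    have h2 : bad.card ≤ Nat.choose Ω.card (k-1) := by
      rw [hbad, ← Finset.card_powersetCard (k-1) Ω]
      exact Finset.card_filter_le _ _
    have hF2 : 2 ≤ Fintype.card F := Fintype.one_lt_card
    have hn1 : 1 ≤ n := Fin.pos lam
    have hΩcard : Ω.card ≤ n - 1 := by
      have hsub : Ω ⊆ Finset.univ.erase lam := by
        intro x hx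
        exact Finset.mem_erase.mpr ⟨fun h => hlamΩ (by rw [← h]; exact hx), Finset.mem_univ x⟩
      have := Finset.card_le_card hsub
      rwa [Finset.card_erase_of_mem (Finset.mem_univ lam), Finset.card_univ,
        Fintype.card_fin] at this
    rcases Nat.lt_or_ge Ω.card (k-1) with hlt | hge
    · rw [Nat.choose_eq_zero_of_lt hlt] at h2
      omega
    · by_cases hk2 : k = 1
      · subst hk2
        simp only [Nat.sub_self, Nat.choose_zero_right] at h2
        omega
    
      · have hk2' : 2 ≤ k := by omega
        obtain ⟨m, hm⟩ : ∃ m, n = m + 1 := ⟨n-1, by omega⟩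
        obtain ⟨j, hj⟩ : ∃ j, k - 1 = j + 1 := ⟨k-2, by omega⟩
        subst hm
        have h3 : Nat.choose Ω.card (k-1) ≤ Nat.choose m (k-1) :=
          Nat.choose_le_choose _ (by omega)
        have h4 : Nat.choose m (k-1) < Nat.choose (m+1) (k-1) := by
          have hpos : 0 < Nat.choose m j := Nat.choose_pos (by omega)
          have hsplit : Nat.choose (m+1) (k-1) = Nat.choose m j + Nat.choose m (k-1) := by
            rw [hj, Nat.choose_succ_succ']
          omega
        omega
  obtain ⟨g, hgW, hg⟩ := exists_avoid W _ havoid hlen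
  refine ⟨g, hgW, ?_⟩
  intro T hTsub hTcore hTk
  by_cases hlamT : lam ∈ T
  · set T' := T.erase lam with hT'
    have hT'sub : T' ⊆ Ω := by
      intro x hx
      obtain ⟨hxne, hxT⟩ := Finset.mem_erase.mp hx
      rcases Finset.mem_insert.mp (hTsub hxT) with h | h
      · exact absurd h hxne
      · exact h
    have hlamT' : lam ∉ T' := Finset.notMem_erase lam T
    have hT'bad : T' ∈ bad := by
      rw [hbad]
      refine Finset.mem_filter.mpr ⟨Finset.mem_powersetCard.mpr ⟨hT'sub, ?_⟩, ?_⟩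
      · rw [hT', Finset.card_erase_of_mem hlamT, hTk]
      · rw [hT', Finset.insert_erase hlamT]
        exact hTcore
    have hgspan : g ∉ Submodule.span F (G '' (T' : Set (Fin n))) :=
      hg _ (List.mem_map.mpr ⟨T', Finset.mem_toList.mpr hT'bad, rfl⟩)
    have hindepT' := (hkey T' hT'bad).1
    have hagree : ∀ x : Fin n, x ∈ T' → Function.update G lam g x = G x := by
      intro x hx
      exact Function.update_of_ne (fun (h : x = lam) => hlamT' (by rw [← h]; exact hx)) g G
    have himg : Function.update G lam g '' (T' : Set (Fin n)) = G '' (T' : Set (Fin n)) :=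
      Set.image_congr (fun x hx => hagree x hx)
    have hindepT'' : LinearIndependent F
        (fun x : (T' : Set (Fin n)) => Function.update G lam g x.1) := by
      have : (fun x : (T' : Set (Fin n)) => Function.update G lam g x.1)
          = fun x : (T' : Set (Fin n)) => G x.1 := funext (fun x => hagree x.1 x.2)
      rw [this]
      exact hindepT'
    have hgspan' : Function.update G lam g lam ∉
        Submodule.span F (Function.update G lam g '' (T' : Set (Fin n))) := by
      rw [himg, Function.update_self]
      exact hgspan
    have hlamT'' : lam ∉ (T' : Set (Fin n)) := by simpa using hlamT'
    have h := (linearIndepOn_insert (f := Function.update G lam g) hlamT'').mpr ⟨hindepT'', hgspan'⟩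
    have hset : insert lam (T' : Set (Fin n)) = (T : Set (Fin n)) := by
      rw [← Finset.coe_insert, hT', Finset.insert_erase hlamT]
    rw [hset] at h
    exact h
  · have hTΩ : T ⊆ Ω := by
      intro x hx
      rcases Finset.mem_insert.mp (hTsub hx) with h | h
      · exact absurd (h ▸ hx) hlamT
      · exact h
    have h := hind T hTΩ hTcore hTk
    have : (fun ℓ : {x // x ∈ T} => Function.update G lam g ℓ.1)
        = fun ℓ : {x // x ∈ T} => G ℓ.1 :=
      funext (fun ℓ => Function.update_of_ne (fun (h' : ℓ.1 = lam) => hlamT (by rw [← h']; exact ℓ.2)) g G)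
    rw [this]
    exact h
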